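/- For every dimension d ≥ 1 there exists a constant C > 0, depending only on d, with the following property: for every convex set D ⊆ ℝ^d contained in a closed ball of radius R > 0, and for every side length w with 0 < w ≤ R, the set of grid indices k ∈ ℤ^d such that the axis-parallel cube ∏_{i=1}^d [w·k_i, w·(k_i + 1)] intersects the boundary of D is finite and has cardinality at most C·(R/w)^{d−1}. -/

import Mathlib

open Set Finset

local notation "⟪" x ", " y "⟫" => @inner ℝ _ _ x y

def gridCube {d : ℕ} (w : ℝ) (k : Fin d → ℤ) : Set (EuclideanSpace ℝ (Fin d)) :=
  {p | ∀ i, w * (k i : ℝ) ≤ p i ∧ p i ≤ w * ((k i : ℝ) + 1)}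

lemma support_vector {d : ℕ} {D : Set (EuclideanSpace ℝ (Fin d))}
    (hD : Convex ℝ D) {p : EuclideanSpace ℝ (Fin d)} (hp : p ∈ frontier D) :
    ∃ a : EuclideanSpace ℝ (Fin d), a ≠ 0 ∧ ∀ y ∈ closure D, ⟪a, y⟫ ≤ ⟪a, p⟫ := by
  have hpc : p ∈ closure D := hp.1
  have hpi : p ∉ interior D := by
    rw [← closure_diff_interior] at hp; exact hp.2
  by_cases hint : (interior D).Nonempty
  · obtain ⟨x0, hx0⟩ := hint
    obtain ⟨f, hf⟩ := geometric_hahn_banach_open_point hD.interior isOpen_interior hpi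
    have hf0 : f ≠ 0 := by
      intro h; have := hf x0 hx0; rw [h] at this; simp at this
    have hsep : ∀ y ∈ closure D, f y ≤ f p := by
      intro y hy
      by_contra h
      push_neg at h
      set δ := f y - f p with hδ
      have hδpos : 0 < δ := by simp [hδ]; linarith
      set t : ℝ := min 1 (δ / (2 * (|f x0 - f y| + 1))) with ht
      have htpos : 0 < t := by
        apply lt_min one_pos
        positivity
      have ht1 : t ≤ 1 := min_le_left _ _
      have hmem : y + t • (x0 - y) ∈ interior D :=
        hD.add_smul_sub_mem_interior' hy hx0 ⟨htpos, ht1⟩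
      have hval : f (y + t • (x0 - y)) = f y + t * (f x0 - f y) := by
        simp [map_add, map_smul, map_sub, smul_eq_mul]
      have hlt := hf _ hmem
      rw [hval] at hlt
      have hb : t * (f x0 - f y) ≥ -(δ / 2) := by
        have hA : (0:ℝ) ≤ |f x0 - f y| := abs_nonneg _
        have ht2 : t ≤ δ / (2 * (|f x0 - f y| + 1)) := min_le_right _ _
        have h1 : t * |f x0 - f y| ≤ δ / 2 := by
          calc t * |f x0 - f y| ≤ (δ / (2 * (|f x0 - f y| + 1))) * |f x0 - f y| :=
                mul_le_mul_of_nonneg_right ht2 hA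
          _ ≤ δ / 2 := by
                rw [div_mul_eq_mul_div, div_le_div_iff₀ (by positivity) (by norm_num)]
                nlinarith
        have h2 : -(t * |f x0 - f y|) ≤ t * (f x0 - f y) := by
          have h3 := neg_abs_le (f x0 - f y)
          nlinarith
        linarith
      linarith
    obtain ⟨a, ha⟩ : ∃ a : EuclideanSpace ℝ (Fin d), ∀ y, ⟪a, y⟫ = f y :=
      ⟨(InnerProductSpace.toDual ℝ _).symm f, fun y => InnerProductSpace.toDual_symm_apply⟩
    refine ⟨a, ?_, fun y hy => by rw [ha, ha]; exact hsep y hy⟩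
    intro h
    apply hf0
    ext y
    have := ha y
    rw [h] at this
    simp only [inner_zero_left] at this
    simp [← this]
  · rw [Set.not_nonempty_iff_eq_empty] at hint
    have hDne : D.Nonempty := by
      rcases D.eq_empty_or_nonempty with h | h
      · rw [h] at hpc; simp at hpc
      · exact h
    have hspan : affineSpan ℝ D ≠ ⊤ := by
      intro h
      have := hD.interior_nonempty_iff_affineSpan_eq_top.2 h
      rw [hint] at this; exact this.ne_empty rfl
    have hdir : (affineSpan ℝ D).direction ≠ ⊤ := by
      intro h
      exact hspan ((AffineSubspace.direction_eq_top_iff_of_nonempty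
        ((affineSpan_nonempty (k := ℝ) (V := EuclideanSpace ℝ (Fin d))).2 hDne)).1 h)
    have horth : ((affineSpan ℝ D).direction)ᗮ ≠ ⊥ := by
      simpa [Submodule.orthogonal_eq_bot_iff] using hdir
    obtain ⟨a, haV, ha0⟩ := Submodule.exists_mem_ne_zero_of_ne_bot horth
    have hclosed : IsClosed ((affineSpan ℝ D : Set (EuclideanSpace ℝ (Fin d)))) :=
      (affineSpan ℝ D).closed_of_finiteDimensional
    have hsub : closure D ⊆ (affineSpan ℝ D : Set _) :=
      closure_minimal (subset_affineSpan ℝ D) hclosed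
    refine ⟨a, ha0, fun y hy => ?_⟩
    have h1 : y -ᵥ p ∈ (affineSpan ℝ D).direction :=
      AffineSubspace.vsub_mem_direction (hsub hy) (hsub hpc)
    have h2 : ⟪y - p, a⟫ = 0 := haV _ h1
    rw [real_inner_comm] at h2
    rw [inner_sub_right] at h2
    linarith


lemma inner_eval {d : ℕ} (a y : EuclideanSpace ℝ (Fin d)) :
    ⟪a, y⟫ = ∑ j, a j * y j := by
  simp [PiLp.inner_apply, RCLike.inner_apply, starRingEnd_apply, mul_comm]


lemma key_escape {d : ℕ} {D : Set (EuclideanSpace ℝ (Fin d))} (hD : Convex ℝ D)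
    {w : ℝ} (hw : 0 < w) {k : Fin d → ℤ} {p : EuclideanSpace ℝ (Fin d)}
    (hpf : p ∈ frontier D) (hpk : p ∈ gridCube w k) :
    ∃ (i : Fin d) (s : Bool),
      gridCube w (Function.update k i (k i + if s then (d : ℤ) + 1 else -((d : ℤ) + 1))) ∩
        closure D = ∅ := by
  by_contra hcon
  push_neg at hcon
  have hq : ∀ (i : Fin d) (s : Bool), ∃ q,
      q ∈ gridCube w (Function.update k i (k i + if s then (d : ℤ) + 1 else -((d : ℤ) + 1))) ∧
      q ∈ closure D := by
    intro i s
    obtain ⟨q, hq1, hq2⟩ := hcon i s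
    exact ⟨q, hq1, hq2⟩
  obtain ⟨a, ha0, hsep⟩ := support_vector hD hpf
  -- pick coordinate with maximal |a i|
  obtain ⟨j0, hj0⟩ : ∃ j, a j ≠ 0 := by
    by_contra h; push_neg at h; exact ha0 (by ext j; exact h j)
  obtain ⟨i, -, hi⟩ := Finset.exists_max_image Finset.univ (fun j => |a j|) ⟨j0, mem_univ j0⟩
  have hi' : ∀ j, |a j| ≤ |a i| := fun j => hi j (mem_univ j)
  have hipos : 0 < |a i| := lt_of_lt_of_le (abs_pos.mpr hj0) (hi' j0)
  set s : Bool := decide (0 < a i) with hs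
  obtain ⟨q, hqc, hqD⟩ := hq i s
  -- coordinate bounds
  have hterm_i : |a i| * (w * d) ≤ a i * (q i - p i) := by
    have hkq := hqc i
    rw [Function.update_self] at hkq
    have hkp := hpk i
    rcases lt_or_ge 0 (a i) with hpos | hneg
    · have hs' : s = true := by simp [hs, hpos]
      rw [hs'] at hkq
      simp only [if_true] at hkq
      have h1 : w * ((k i : ℝ) + (d + 1)) ≤ q i := by
        have := hkq.1; push_cast at this; linarith
      have h2 : p i ≤ w * ((k i : ℝ) + 1) := hkp.2
      have : w * d ≤ q i - p i := by nlinarith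
      have habs : |a i| = a i := abs_of_pos hpos
      rw [habs]; nlinarith
    · have hneg' : a i < 0 := lt_of_le_of_ne hneg (fun h => hipos.ne' (by simp [← h]))
      have hs' : s = false := by simp [hs]; linarith
      rw [hs'] at hkq
      simp only [if_false] at hkq
      have h1 : q i ≤ w * ((k i : ℝ) - d) := by
        have := hkq.2; push_cast at this; linarith
      have h2 : w * (k i : ℝ) ≤ p i := hkp.1
      have h3 : q i - p i ≤ -(w * d) := by nlinarith
      have habs : |a i| = -a i := abs_of_neg hneg'
      rw [habs]; nlinarith
  have hterm_j : ∀ j, j ≠ i → -(|a i| * w) ≤ a j * (q j - p j) := by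
    intro j hj
    have hkq := hqc j
    rw [Function.update_of_ne hj] at hkq
    have hkp := hpk j
    have h1 : |q j - p j| ≤ w := by
      rw [abs_le]; constructor <;> nlinarith [hkq.1, hkq.2, hkp.1, hkp.2]
    have h2 : -(|a j| * w) ≤ a j * (q j - p j) := by
      have := abs_mul (a j) (q j - p j)
      have h3 : |a j * (q j - p j)| ≤ |a j| * w := by
        rw [abs_mul]; exact mul_le_mul_of_nonneg_left h1 (abs_nonneg _)
      have := neg_abs_le (a j * (q j - p j))
      linarith
    have : |a j| * w ≤ |a i| * w := mul_le_mul_of_nonneg_right (hi' j) hw.le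
    linarith
  -- sum up
  have hsum : ∑ j, a j * (q j - p j) ≤ 0 := by
    have := hsep q hqD
    rw [inner_eval, inner_eval] at this
    have : ∑ j, a j * q j - ∑ j, a j * p j ≤ 0 := by linarith
    rw [← Finset.sum_sub_distrib] at this
    convert this using 2 with j
    ring
  have hlb : ∑ j, (if j = i then |a i| * (w * d) else -(|a i| * w)) ≤
      ∑ j, a j * (q j - p j) := by
    apply Finset.sum_le_sum
    intro j _
    by_cases hji : j = i
    · subst hji; simp only [if_true]; exact hterm_i
    · simp only [hji, if_false]; exact hterm_j j hji
  have hev : ∑ j : Fin d, (if j = i then |a i| * (w * d) else -(|a i| * w)) =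
      |a i| * (w * d) + (d - 1 : ℝ) * (-(|a i| * w)) := by
    have hsplit : ∀ j : Fin d, (if j = i then |a i| * (w * d) else -(|a i| * w)) =
        -(|a i| * w) + (if j = i then |a i| * (w * d) - (-(|a i| * w)) else 0) := by
      intro j; by_cases h : j = i <;> simp [h]
    rw [Finset.sum_congr rfl (fun j _ => hsplit j), Finset.sum_add_distrib,
      Finset.sum_const, Finset.sum_ite_eq' Finset.univ i, if_pos (Finset.mem_univ i)]
    simp only [card_univ, Fintype.card_fin, nsmul_eq_mul]
    ring
  have hd1 : (1 : ℝ) ≤ (d : ℝ) := by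
    have := Fin.pos i
    exact_mod_cast Nat.one_le_cast.mpr this
  rw [hev] at hlb
  nlinarith


/-- Interval property of columns of cubes meeting a convex set. -/
lemma column_interval {d : ℕ} {C : Set (EuclideanSpace ℝ (Fin d))} (hC : Convex ℝ C)
    {w : ℝ} (hw : 0 < w) (k : Fin d → ℤ) (i : Fin d) {t1 t2 t3 : ℤ}
    (h12 : t1 ≤ t2) (h23 : t2 ≤ t3)
    (h1 : (gridCube w (Function.update k i t1) ∩ C).Nonempty)
    (h3 : (gridCube w (Function.update k i t3) ∩ C).Nonempty) :
    (gridCube w (Function.update k i t2) ∩ C).Nonempty := by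
  obtain ⟨q1, hq1c, hq1C⟩ := h1
  obtain ⟨q3, hq3c, hq3C⟩ := h3
  have hq1i := hq1c i; rw [Function.update_self] at hq1i
  have hq3i := hq3c i; rw [Function.update_self] at hq3i
  by_cases hcase : w * (t2 : ℝ) ≤ q1 i
  · refine ⟨q1, ?_, hq1C⟩
    intro j
    by_cases hj : j = i
    · subst hj
      rw [Function.update_self]
      refine ⟨hcase, le_trans hq1i.2 ?_⟩
      have : (t1 : ℝ) ≤ t2 := by exact_mod_cast h12
      nlinarith
    · have := hq1c j; rwa [Function.update_of_ne hj] at this ⊢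
  · push_neg at hcase
    have hlt : q1 i < w * (t2 : ℝ) := hcase
    have hge : w * (t2 : ℝ) ≤ q3 i := by
      have : (t2 : ℝ) ≤ t3 := by exact_mod_cast h23
      nlinarith [hq3i.1]
    have hden : 0 < q3 i - q1 i := by linarith
    set θ : ℝ := (w * t2 - q1 i) / (q3 i - q1 i) with hθ
    have hθ0 : 0 ≤ θ := div_nonneg (by linarith) hden.le
    have hθ1 : θ ≤ 1 := by
      rw [hθ, div_le_one hden]; linarith
    have hmemC : (1 - θ) • q1 + θ • q3 ∈ C :=
      hC hq1C hq3C (by linarith) hθ0 (by ring)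
    refine ⟨(1 - θ) • q1 + θ • q3, ?_, hmemC⟩
    intro j
    have hcoord : ((1 - θ) • q1 + θ • q3) j = (1 - θ) * q1 j + θ * q3 j := by
      simp [PiLp.add_apply, PiLp.smul_apply, smul_eq_mul]
    rw [hcoord]
    by_cases hj : j = i
    · subst hj
      rw [Function.update_self]
      have hval : (1 - θ) * q1 j + θ * q3 j = w * (t2 : ℝ) := by
        rw [hθ]; field_simp; ring
      rw [hval]
      exact ⟨le_refl _, by nlinarith⟩
    · have ha := hq1c j; rw [Function.update_of_ne hj] at ha
      have hb := hq3c j; rw [Function.update_of_ne hj] at hb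
      rw [Function.update_of_ne hj]
      constructor <;> nlinarith [ha.1, ha.2, hb.1, hb.2]


lemma coord_bound {d : ℕ} {c : EuclideanSpace ℝ (Fin d)} {R w : ℝ} (hw : 0 < w)
    {k : Fin d → ℤ} (hk : (gridCube w k ∩ Metric.closedBall c R).Nonempty) (j : Fin d) :
    k j ∈ Finset.Icc (⌈(c j - R) / w⌉ - 1) (⌊(c j + R) / w⌋) := by
  obtain ⟨p, hpc, hpB⟩ := hk
  have hdist : dist p c ≤ R := Metric.mem_closedBall.mp hpB
  have hco : |p j - c j| ≤ R := by
    have h1 : dist p c = Real.sqrt (∑ i, dist (p i) (c i) ^ 2) := EuclideanSpace.dist_eq p c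
    have h2 : (dist (p j) (c j)) ^ 2 ≤ ∑ i, dist (p i) (c i) ^ 2 :=
      Finset.single_le_sum (f := fun i => dist (p i) (c i) ^ 2) (fun i _ => sq_nonneg _) (Finset.mem_univ j)
    have h3 : |p j - c j| = Real.sqrt ((dist (p j) (c j)) ^ 2) := by
      rw [Real.sqrt_sq_eq_abs, Real.dist_eq, abs_abs]
    rw [h3]
    calc Real.sqrt ((dist (p j) (c j)) ^ 2) ≤ Real.sqrt (∑ i, dist (p i) (c i) ^ 2) :=
          Real.sqrt_le_sqrt h2
    _ = dist p c := h1.symm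
    _ ≤ R := hdist
  have hj := hpc j
  rw [abs_le] at hco
  rw [Finset.mem_Icc]
  constructor
  · have h4 : (c j - R) / w ≤ (k j : ℝ) + 1 := by
      rw [div_le_iff₀ hw]
      nlinarith [hj.2, hco.1]
    have := Int.ceil_le.mpr (by exact_mod_cast h4 : ((c j - R) / w : ℝ) ≤ ((k j + 1 : ℤ) : ℝ))
    omega
  · have h4 : (k j : ℝ) ≤ (c j + R) / w := by
      rw [le_div_iff₀ hw]
      nlinarith [hj.1, hco.2]
    exact Int.le_floor.mpr h4


/-- Surface-area lemma, counting form: there is a dimension-dependent constant `C` such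
that at most `C·(R/w)^(d−1)` axis-parallel grid cubes of side length `w` meet the
boundary of a convex set contained in a ball of radius `R ≥ w`. -/
theorem grid_cubes_meeting_convex_boundary (d : ℕ) (hd : 1 ≤ d) :
    ∃ C : ℝ, 0 < C ∧
      ∀ (D : Set (EuclideanSpace ℝ (Fin d))) (c : EuclideanSpace ℝ (Fin d)) (R : ℝ),
        0 < R → Convex ℝ D → D ⊆ Metric.closedBall c R →
        ∀ w : ℝ, 0 < w → w ≤ R →
          {k : Fin d → ℤ |
              ({p : EuclideanSpace ℝ (Fin d) |
                  ∀ i, w * (k i : ℝ) ≤ p i ∧ p i ≤ w * ((k i : ℝ) + 1)} ∩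
                frontier D).Nonempty}.Finite ∧
          (({k : Fin d → ℤ |
              ({p : EuclideanSpace ℝ (Fin d) |
                  ∀ i, w * (k i : ℝ) ≤ p i ∧ p i ≤ w * ((k i : ℝ) + 1)} ∩
                frontier D).Nonempty}.ncard : ℝ) ≤ C * (R / w) ^ (d - 1)) := by
  classical
  have hdR : (1 : ℝ) ≤ (d : ℝ) := by exact_mod_cast hd
  refine ⟨(2 * d) * (2 * d + 1) * 4 ^ (d - 1), ?_, ?_⟩
  · apply mul_pos (mul_pos (by linarith) (by linarith))
    positivity
  intro D c R hR hD hDR w hw hwR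
  set lo : Fin d → ℤ := fun j => ⌈(c j - R) / w⌉ - 1 with hlo
  set hi : Fin d → ℤ := fun j => ⌊(c j + R) / w⌋ with hhi
  set Box : Finset (Fin d → ℤ) := Fintype.piFinset (fun j => Finset.Icc (lo j) (hi j)) with hBox
  set T : Set (Fin d → ℤ) := {k | (gridCube w k ∩ closure D).Nonempty} with hT
  have hclD : closure D ⊆ Metric.closedBall c R :=
    closure_minimal hDR Metric.isClosed_closedBall
  have hTBox : ∀ k ∈ T, k ∈ Box := by
    intro k hk
    rw [hBox, Fintype.mem_piFinset]
    intro j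
    obtain ⟨p, h1, h2⟩ := hk
    exact coord_bound hw ⟨p, h1, hclD h2⟩ j
  have hST : ∀ k : Fin d → ℤ, (gridCube w k ∩ frontier D).Nonempty → k ∈ T := by
    rintro k ⟨p, h1, h2⟩
    exact ⟨p, h1, frontier_subset_closure h2⟩
  have hSfin : {k : Fin d → ℤ | (gridCube w k ∩ frontier D).Nonempty}.Finite :=
    Box.finite_toSet.subset (fun k hk => hTBox k (hST k hk))
  refine ⟨hSfin, ?_⟩
  -- the covering family
  set A : Fin d × Bool → Finset (Fin d → ℤ) := fun is =>
    Box.filter (fun k => k ∈ T ∧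
      Function.update k is.1 (k is.1 + (if is.2 then ((d : ℤ) + 1) else -((d : ℤ) + 1))) ∉ T)
    with hA
  have hSA : ∀ k : Fin d → ℤ, (gridCube w k ∩ frontier D).Nonempty →
      ∃ is : Fin d × Bool, k ∈ A is := by
    rintro k ⟨p, hp1, hp2⟩
    obtain ⟨i, s, hempty⟩ := key_escape hD hw hp2 hp1
    refine ⟨⟨i, s⟩, ?_⟩
    rw [hA, Finset.mem_filter]
    have hkT : k ∈ T := ⟨p, hp1, frontier_subset_closure hp2⟩
    refine ⟨hTBox k hkT, hkT, ?_⟩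
    intro hcon
    rw [hT, Set.mem_setOf_eq, hempty] at hcon
    exact Set.not_nonempty_empty hcon
  have hsubset : hSfin.toFinset ⊆ Finset.univ.biUnion A := by
    intro k hk
    rw [Set.Finite.mem_toFinset] at hk
    obtain ⟨is, his⟩ := hSA k hk
    exact Finset.mem_biUnion.mpr ⟨is, Finset.mem_univ _, his⟩
  -- per-piece cardinality bound (in ℕ)
  have hAcard : ∀ is : Fin d × Bool, (A is).card ≤ (2 * d + 1) *
      (Fintype.piFinset (fun j => if j = is.1 then ({0} : Finset ℤ)
        else Finset.Icc (lo j) (hi j))).card := by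
    rintro ⟨i, s⟩
    have hπ : ∀ k k' : Fin d → ℤ, Function.update k i 0 = Function.update k' i 0 →
        ∀ j, j ≠ i → k j = k' j := by
      intro k k' h j hj
      have := congrFun h j
      rwa [Function.update_of_ne hj, Function.update_of_ne hj] at this
    -- pairwise bound inside a fiber
    have claim : ∀ k k' : Fin d → ℤ, k ∈ A (i, s) → k' ∈ A (i, s) →
        Function.update k i 0 = Function.update k' i 0 → k' i - k i ≤ (d : ℤ) := by
      intro k k' hk hk' hππ
      by_contra hgt
      push_neg at hgt
      rw [hA, Finset.mem_filter] at hk hk'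
      obtain ⟨-, hkT, hknot⟩ := hk
      obtain ⟨-, hk'T, hk'not⟩ := hk'
      set t2 : ℤ := if s then k i + ((d : ℤ) + 1) else k' i - ((d : ℤ) + 1) with ht2
      have h12 : k i ≤ t2 := by cases s <;> simp [ht2] <;> omega
      have h23 : t2 ≤ k' i := by cases s <;> simp [ht2] <;> omega
      have h1 : (gridCube w (Function.update k i (k i)) ∩ closure D).Nonempty := by
        rw [Function.update_eq_self]; exact hkT
      have h3eq : Function.update k i (k' i) = k' := by
        funext j
        by_cases hj : j = i
        · subst hj; rw [Function.update_self]
        · rw [Function.update_of_ne hj]; exact hπ k k' hππ j hj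
      have h3 : (gridCube w (Function.update k i (k' i)) ∩ closure D).Nonempty := by
        rw [h3eq]; exact hk'T
      have hmid := column_interval hD.closure hw k i h12 h23 h1 h3
      cases s with
      | true =>
        apply hknot
        have : k i + (if (true : Bool) then ((d : ℤ) + 1) else -((d : ℤ) + 1)) = t2 := by
          simp [ht2]
        rw [this]
        exact hmid
      | false =>
        apply hk'not
        have heq2 : Function.update k' i (k' i +
            (if (false : Bool) then ((d : ℤ) + 1) else -((d : ℤ) + 1))) =
            Function.update k i t2 := by
          funext j
          by_cases hj : j = i
          · subst hj; rw [Function.update_self, Function.update_self, ht2]; simp; ring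
          · rw [Function.update_of_ne hj, Function.update_of_ne hj]
            exact (hπ k k' hππ j hj).symm
        rw [heq2]
        exact hmid
    have himgsub : (A (i, s)).image (fun k => Function.update k i 0) ⊆
        Fintype.piFinset (fun j => if j = i then ({0} : Finset ℤ)
          else Finset.Icc (lo j) (hi j)) := by
      intro b hb
      rw [Finset.mem_image] at hb
      obtain ⟨k, hk, rfl⟩ := hb
      rw [hA, Finset.mem_filter] at hk
      have hkBox := hk.1
      rw [hBox, Fintype.mem_piFinset] at hkBox
      rw [Fintype.mem_piFinset]
      intro j
      by_cases hj : j = i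
      · subst hj; simp
      · simp only [hj, if_false]
        rw [Function.update_of_ne hj]
        exact hkBox j
    have hfib : ∀ b ∈ (A (i, s)).image (fun k => Function.update k i 0),
        ((A (i, s)).filter (fun k => Function.update k i 0 = b)).card ≤ 2 * d + 1 := by
      intro b hb
      rcases Finset.eq_empty_or_nonempty ((A (i, s)).filter
          (fun k => Function.update k i 0 = b)) with he | ⟨k0, hk0⟩
      · rw [he]; simp
      · rw [Finset.mem_filter] at hk0
        calc ((A (i, s)).filter (fun k => Function.update k i 0 = b)).card
            ≤ (Finset.Icc (k0 i - (d : ℤ)) (k0 i + (d : ℤ))).card := by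
              apply Finset.card_le_card_of_injOn (fun k => k i)
              · intro k hk
                rw [Finset.mem_coe, Finset.mem_filter] at hk
                simp only [Finset.mem_coe, Finset.mem_Icc]
                have h1 := claim k k0 hk.1 hk0.1 (hk.2.trans hk0.2.symm)
                have h2 := claim k0 k hk0.1 hk.1 (hk0.2.trans hk.2.symm)
                omega
              · intro k hk k' hk' hkk'
                simp only [Finset.coe_filter, Set.mem_setOf_eq] at hk hk'
                funext j
                by_cases hj : j = i
                · subst hj; exact hkk'
                · have := hπ k k' (hk.2.trans hk'.2.symm) j hj
                  exact this
        _ ≤ 2 * d + 1 := by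
              rw [Int.card_Icc]
              omega
    calc (A (i, s)).card
        ≤ (2 * d + 1) * ((A (i, s)).image (fun k => Function.update k i 0)).card :=
          Finset.card_le_mul_card_image _ _ hfib
    _ ≤ (2 * d + 1) * (Fintype.piFinset (fun j => if j = (i, s).1 then ({0} : Finset ℤ)
          else Finset.Icc (lo j) (hi j))).card :=
          Nat.mul_le_mul_left _ (Finset.card_le_card himgsub)
  -- real bound on interval cardinalities
  have hIccR : ∀ j : Fin d, (((Finset.Icc (lo j) (hi j)).card : ℝ)) ≤ 4 * (R / w) := by
    intro j
    rw [Int.card_Icc]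
    have hfl : ((hi j : ℝ)) ≤ (c j + R) / w := Int.floor_le _
    have hce : (c j - R) / w - 1 ≤ ((lo j : ℝ)) := by
      have h := Int.le_ceil ((c j - R) / w)
      have : ((lo j : ℝ)) = ((⌈(c j - R) / w⌉ : ℤ) : ℝ) - 1 := by
        rw [hlo]; push_cast; ring
      rw [this]; linarith
    have h2Rw : (2 : ℝ) ≤ 2 * (R / w) := by
      have : (1 : ℝ) ≤ R / w := (one_le_div hw).mpr hwR
      linarith
    have hsplit : (c j + R) / w - (c j - R) / w = 2 * (R / w) := by
      field_simp
      ring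
    by_cases hpos : 0 ≤ hi j + 1 - lo j
    · have hcast : (((hi j + 1 - lo j).toNat : ℕ) : ℝ) = ((hi j : ℝ) + 1 - (lo j : ℝ)) := by
        rw [← Int.cast_natCast, Int.toNat_of_nonneg hpos]; push_cast; ring
      rw [hcast]
      linarith
    · push_neg at hpos
      have : (hi j + 1 - lo j).toNat = 0 := Int.toNat_of_nonpos (by omega)
      rw [this]
      have : (0 : ℝ) < R / w := by positivity
      norm_num
      linarith
  have hBox'R : ∀ i : Fin d, ((Fintype.piFinset (fun j => if j = i then ({0} : Finset ℤ)
      else Finset.Icc (lo j) (hi j))).card : ℝ) ≤ (4 * (R / w)) ^ (d - 1) := by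
    intro i
    rw [Fintype.card_piFinset]
    push_cast
    rw [← Finset.prod_erase_mul Finset.univ _ (Finset.mem_univ i)]
    have hfi : ((if i = i then ({0} : Finset ℤ) else Finset.Icc (lo i) (hi i)).card : ℝ) = 1 := by
      simp
    rw [hfi, mul_one]
    have hcarderase : (Finset.univ.erase i).card = d - 1 := by
      rw [Finset.card_erase_of_mem (Finset.mem_univ i), Finset.card_univ, Fintype.card_fin]
    calc ∏ j ∈ Finset.univ.erase i,
          ((if j = i then ({0} : Finset ℤ) else Finset.Icc (lo j) (hi j)).card : ℝ)
        ≤ ∏ _j ∈ Finset.univ.erase i, (4 * (R / w)) := by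
          apply Finset.prod_le_prod
          · intro j _; positivity
          · intro j hj
            rw [if_neg (Finset.ne_of_mem_erase hj)]
            exact hIccR j
    _ = (4 * (R / w)) ^ (d - 1) := by rw [Finset.prod_const, hcarderase]
  have hAR : ∀ is : Fin d × Bool,
      ((A is).card : ℝ) ≤ (2 * (d : ℝ) + 1) * (4 * (R / w)) ^ (d - 1) := by
    intro is
    calc ((A is).card : ℝ)
        ≤ (((2 * d + 1) * (Fintype.piFinset (fun j => if j = is.1 then ({0} : Finset ℤ)
            else Finset.Icc (lo j) (hi j))).card : ℕ) : ℝ) := by exact_mod_cast hAcard is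
    _ ≤ (2 * (d : ℝ) + 1) * (4 * (R / w)) ^ (d - 1) := by
        push_cast
        apply mul_le_mul_of_nonneg_left (hBox'R is.1) (by positivity)
  calc ({k : Fin d → ℤ | (gridCube w k ∩ frontier D).Nonempty}.ncard : ℝ)
      = (hSfin.toFinset.card : ℝ) := by rw [Set.ncard_eq_toFinset_card _ hSfin]
  _ ≤ ((Finset.univ.biUnion A).card : ℝ) := by
      exact_mod_cast Finset.card_le_card hsubset
  _ ≤ ((∑ is : Fin d × Bool, (A is).card : ℕ) : ℝ) := by
      exact_mod_cast Finset.card_biUnion_le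
  _ ≤ ∑ _is : Fin d × Bool, ((2 * (d : ℝ) + 1) * (4 * (R / w)) ^ (d - 1)) := by
      push_cast
      exact Finset.sum_le_sum (fun is _ => hAR is)
  _ = (2 * (d : ℝ)) * ((2 * (d : ℝ) + 1) * (4 * (R / w)) ^ (d - 1)) := by
      rw [Finset.sum_const, Finset.card_univ, Fintype.card_prod, Fintype.card_fin,
        Fintype.card_bool, nsmul_eq_mul]
      push_cast
      ring
  _ = 2 * (d : ℝ) * (2 * (d : ℝ) + 1) * 4 ^ (d - 1) * (R / w) ^ (d - 1) := by
      rw [mul_pow]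
      ring
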